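/- arXiv:math/0610710 — 4 statements merged into one kernel-verified Lean document; each statement's English description precedes it below -/
import Mathlib

section
/- The open unit ball B = {(z_1,z_2) ∈ ℂ² : |z_1|² + |z_2|² < 1} and the open unit bidisc D² = {(z_1,z_2) ∈ ℂ² : |z_1| < 1 and |z_2| < 1} are not biholomorphic: there is no holomorphic bijection F : B → D² whose inverse is holomorphic. -/
open Set Metric

/-- The unit ball `B = {(z₁,z₂) ∈ ℂ² : |z₁|² + |z₂|² < 1}`. -/
def unitBall2 : Set (ℂ × ℂ) := {z | ‖z.1‖ ^ 2 + ‖z.2‖ ^ 2 < 1}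

/-- The unit bidisc `D² = {(z₁,z₂) ∈ ℂ² : |z₁| < 1 and |z₂| < 1}`. -/
def bidisc : Set (ℂ × ℂ) := {z | ‖z.1‖ < 1 ∧ ‖z.2‖ < 1}

open Complex in
noncomputable def mob (a z : ℂ) : ℂ := (z - a) / (1 - (starRingEnd ℂ) a * z)

lemma mob_den_ne (a z : ℂ) (ha : ‖a‖ < 1) (hz : ‖z‖ < 1) :
    1 - (starRingEnd ℂ) a * z ≠ 0 := by
  intro h
  have h1 : (starRingEnd ℂ) a * z = 1 := by linear_combination -h
  have := congrArg norm h1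
  simp [map_mul] at this
  nlinarith [norm_nonneg a, norm_nonneg z]

lemma mob_key (a z : ℂ) :
    Complex.normSq (1 - (starRingEnd ℂ) a * z) - Complex.normSq (z - a)
      = (1 - Complex.normSq a) * (1 - Complex.normSq z) := by
  simp only [Complex.normSq_apply, Complex.sub_re, Complex.sub_im, Complex.mul_re,
    Complex.mul_im, Complex.one_re, Complex.one_im, Complex.conj_re, Complex.conj_im]
  ring

lemma mob_mapsTo {a z : ℂ} (ha : ‖a‖ < 1) (hz : ‖z‖ < 1) : ‖mob a z‖ < 1 := by
  have hd := mob_den_ne a z ha hz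
  rw [mob, norm_div, div_lt_one (norm_pos_iff.mpr hd)]
  have h1 : Complex.normSq a < 1 := by
    rw [← Complex.sq_norm] at *; nlinarith [norm_nonneg a]
  have h2 : Complex.normSq z < 1 := by
    rw [← Complex.sq_norm] at *; nlinarith [norm_nonneg z]
  have key := mob_key a z
  have : Complex.normSq (z - a) < Complex.normSq (1 - (starRingEnd ℂ) a * z) := by nlinarith
  have h3 : ‖z - a‖ ^ 2 < ‖1 - (starRingEnd ℂ) a * z‖ ^ 2 := by
    rw [Complex.sq_norm, Complex.sq_norm]; exact this
  nlinarith [norm_nonneg (z - a), norm_nonneg (1 - (starRingEnd ℂ) a * z)]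

lemma mob_self (a : ℂ) : mob a a = 0 := by simp [mob]

lemma mob_zero (a : ℂ) : mob (-a) 0 = a := by simp [mob]

lemma mob_inv {a z : ℂ} (ha : ‖a‖ < 1) (hz : ‖z‖ < 1) : mob (-a) (mob a z) = z := by
  have hd := mob_den_ne a z ha hz
  have hda : (1 : ℂ) - (starRingEnd ℂ) a * a ≠ 0 := mob_den_ne a a ha ha
  rw [mob, mob, map_neg]
  rw [div_eq_iff, sub_neg_eq_add]
  · rw [mul_comm] at hd
    field_simp
    ring
  · intro h
    apply hda
    field_simp at h
    linear_combination h

lemma mob_diffAt {a z : ℂ} (ha : ‖a‖ < 1) (hz : ‖z‖ < 1) :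
    DifferentiableAt ℂ (mob a) z := by
  apply DifferentiableAt.div
  · fun_prop
  · fun_prop
  · exact mob_den_ne a z ha hz

noncomputable def toE : (ℂ × ℂ) →L[ℂ] EuclideanSpace ℂ (Fin 2) :=
  (EuclideanSpace.equiv (Fin 2) ℂ).symm.toContinuousLinearMap.comp
    (ContinuousLinearMap.pi ![ContinuousLinearMap.fst ℂ ℂ ℂ, ContinuousLinearMap.snd ℂ ℂ ℂ])

lemma toE_norm_sq (p : ℂ × ℂ) : ‖toE p‖ ^ 2 = ‖p.1‖ ^ 2 + ‖p.2‖ ^ 2 := by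
  have h : ∀ i : Fin 2, toE p i = ![p.1, p.2] i := by
    intro i
    fin_cases i <;> rfl
  rw [EuclideanSpace.norm_eq]
  rw [Real.sq_sqrt (by positivity)]
  rw [Fin.sum_univ_two, h 0, h 1]
  simp

/-- Schwarz bound on the ball-to-bidisc side: `‖L v‖ ≤ ρ(v)` (sup norm on the left!). -/
lemma claimA {F : ℂ × ℂ → ℂ × ℂ} {L : (ℂ × ℂ) →L[ℂ] ℂ × ℂ}
    (hFd : DifferentiableOn ℂ F unitBall2) (hFm : MapsTo F unitBall2 bidisc)
    (hF0 : F 0 = 0) (hL : HasFDerivAt F L 0) (v : ℂ × ℂ) :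
    ‖L v‖ ^ 2 ≤ ‖v.1‖ ^ 2 + ‖v.2‖ ^ 2 := by
  rcases eq_or_ne v 0 with rfl | hv
  · simp
  set ρ : ℝ := Real.sqrt (‖v.1‖ ^ 2 + ‖v.2‖ ^ 2) with hρ
  have hvpos : 0 < ‖v.1‖ ^ 2 + ‖v.2‖ ^ 2 := by
    have : v.1 ≠ 0 ∨ v.2 ≠ 0 := by
      by_contra hc
      push_neg at hc
      exact hv (Prod.ext hc.1 hc.2)
    rcases this with h | h
    · have := norm_pos_iff.mpr h
      positivity
    · have := norm_pos_iff.mpr h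
      positivity
  have hρpos : 0 < ρ := Real.sqrt_pos.mpr hvpos
  have hρsq : ρ ^ 2 = ‖v.1‖ ^ 2 + ‖v.2‖ ^ 2 := Real.sq_sqrt hvpos.le
  -- the scalar curve
  have hsm : ∀ z : ℂ, z ∈ ball (0:ℂ) (1/ρ) → z • v ∈ unitBall2 := by
    intro z hz
    rw [mem_ball_zero_iff] at hz
    have : ‖(z • v).1‖ ^ 2 + ‖(z • v).2‖ ^ 2 = ‖z‖ ^ 2 * (‖v.1‖ ^ 2 + ‖v.2‖ ^ 2) := by
      simp [Prod.smul_fst, Prod.smul_snd, norm_smul]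
      ring
    have hz2 : ‖z‖ ^ 2 < (1/ρ) ^ 2 := by
      have := norm_nonneg z
      nlinarith
    show ‖(z • v).1‖ ^ 2 + ‖(z • v).2‖ ^ 2 < 1
    rw [this, ← hρsq]
    calc ‖z‖ ^ 2 * ρ ^ 2 < (1/ρ) ^ 2 * ρ ^ 2 := by nlinarith
    _ = 1 := by field_simp
  have hcurve : HasDerivAt (fun z : ℂ => F (z • v)) (L v) 0 := by
    have h1 : HasDerivAt (fun z : ℂ => z • v) v 0 := by
      simpa using (hasDerivAt_id (0:ℂ)).smul_const v
    have h2 : HasFDerivAt F L ((fun z : ℂ => z • v) 0) := by simpa using hL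
    exact h2.comp_hasDerivAt 0 h1
  have hdiff : DifferentiableOn ℂ (fun z : ℂ => F (z • v)) (ball 0 (1/ρ)) := by
    apply hFd.comp
    · exact ((differentiable_id.smul_const v).differentiableOn)
    · exact hsm
  suffices h : ‖L v‖ ≤ ρ by
    calc ‖L v‖ ^ 2 ≤ ρ ^ 2 := by nlinarith [norm_nonneg (L v)]
    _ = _ := hρsq
  rw [Prod.norm_def]
  have main : ∀ (P : (ℂ × ℂ) →L[ℂ] ℂ),
      (∀ w ∈ bidisc, ‖P w‖ < 1) → ‖P (L v)‖ ≤ ρ := by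
    intro P hP
    have hg : DifferentiableOn ℂ (fun z : ℂ => P (F (z • v))) (ball 0 (1/ρ)) :=
      (P.differentiable.comp_differentiableOn hdiff)
    have hg0 : P (F ((0:ℂ) • v)) = 0 := by simp [hF0]
    have hmap : MapsTo (fun z : ℂ => P (F (z • v))) (ball 0 (1/ρ))
        (ball (P (F ((0:ℂ) • v))) 1) := by
      intro z hz
      rw [hg0, mem_ball_zero_iff]
      exact hP _ (hFm (hsm z hz))
    have hder : HasDerivAt (fun z : ℂ => P (F (z • v))) (P (L v)) 0 :=
      P.hasFDerivAt.comp_hasDerivAt 0 hcurve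
    have := Complex.norm_deriv_le_div_of_mapsTo_ball hg (hmap.mono_right ball_subset_closedBall) (by positivity)
    rw [hder.deriv] at this
    calc ‖P (L v)‖ ≤ 1 / (1/ρ) := this
    _ = ρ := one_div_one_div ρ
  have h1 := main (ContinuousLinearMap.fst ℂ ℂ ℂ) (fun w hw => hw.1)
  have h2 := main (ContinuousLinearMap.snd ℂ ℂ ℂ) (fun w hw => hw.2)
  exact max_le h1 h2

/-- Schwarz bound on the bidisc-to-ball side: `ρ(M w) ≤ ‖w‖` (sup norm on the right). -/
lemma claimB {G : ℂ × ℂ → ℂ × ℂ} {M : (ℂ × ℂ) →L[ℂ] ℂ × ℂ}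
    (hGd : DifferentiableOn ℂ G bidisc) (hGm : MapsTo G bidisc unitBall2)
    (hG0 : G 0 = 0) (hM : HasFDerivAt G M 0) (w : ℂ × ℂ) :
    ‖(M w).1‖ ^ 2 + ‖(M w).2‖ ^ 2 ≤ ‖w‖ ^ 2 := by
  rcases eq_or_ne w 0 with rfl | hw
  · simp
  have hwpos : 0 < ‖w‖ := norm_pos_iff.mpr hw
  have hsm : ∀ z : ℂ, z ∈ ball (0:ℂ) (1/‖w‖) → z • w ∈ bidisc := by
    intro z hz
    rw [mem_ball_zero_iff] at hz
    constructor
    · rw [Prod.smul_fst, norm_smul]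
      calc ‖z‖ * ‖w.1‖ ≤ ‖z‖ * ‖w‖ := by
            have := norm_nonneg z
            exact mul_le_mul_of_nonneg_left (le_max_left _ _) this
      _ < (1/‖w‖) * ‖w‖ := by nlinarith
      _ = 1 := by field_simp
    · rw [Prod.smul_snd, norm_smul]
      calc ‖z‖ * ‖w.2‖ ≤ ‖z‖ * ‖w‖ := by
            have := norm_nonneg z
            exact mul_le_mul_of_nonneg_left (le_max_right _ _) this
      _ < (1/‖w‖) * ‖w‖ := by nlinarith
      _ = 1 := by field_simp
  have hcurve : HasDerivAt (fun z : ℂ => G (z • w)) (M w) 0 := by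
    have h1 : HasDerivAt (fun z : ℂ => z • w) w 0 := by
      simpa using (hasDerivAt_id (0:ℂ)).smul_const w
    have h2 : HasFDerivAt G M ((fun z : ℂ => z • w) 0) := by simpa using hM
    exact h2.comp_hasDerivAt 0 h1
  have hder : HasDerivAt (fun z : ℂ => toE (G (z • w))) (toE (M w)) 0 :=
    toE.hasFDerivAt.comp_hasDerivAt 0 hcurve
  have hdiff : DifferentiableOn ℂ (fun z : ℂ => toE (G (z • w))) (ball 0 (1/‖w‖)) :=
    toE.differentiable.comp_differentiableOn
      (hGd.comp ((differentiable_id.smul_const w).differentiableOn) hsm)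
  have hmap : MapsTo (fun z : ℂ => toE (G (z • w))) (ball 0 (1/‖w‖))
      (ball (toE (G ((0:ℂ) • w))) 1) := by
    intro z hz
    have h0 : toE (G ((0:ℂ) • w)) = 0 := by simp [hG0]
    rw [h0, mem_ball_zero_iff]
    have hmem := hGm (hsm z hz)
    have := toE_norm_sq (G (z • w))
    have hlt : ‖toE (G (z • w))‖ ^ 2 < 1 := by
      rw [this]; exact hmem
    nlinarith [norm_nonneg (toE (G (z • w)))]
  have := Complex.norm_deriv_le_div_of_mapsTo_ball hdiff (hmap.mono_right ball_subset_closedBall) (by positivity)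
  rw [hder.deriv] at this
  have hle : ‖toE (M w)‖ ≤ ‖w‖ := by
    calc ‖toE (M w)‖ ≤ 1 / (1/‖w‖) := this
    _ = ‖w‖ := one_div_one_div _
  calc ‖(M w).1‖ ^ 2 + ‖(M w).2‖ ^ 2 = ‖toE (M w)‖ ^ 2 := (toE_norm_sq _).symm
  _ ≤ ‖w‖ ^ 2 := by nlinarith [norm_nonneg (toE (M w))]

/-- Poincaré's theorem: the unit ball and the unit bidisc of `ℂ²` are not
biholomorphic, i.e. there is no holomorphic bijection from the ball onto the
bidisc whose inverse is holomorphic. -/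
theorem ball_not_biholomorphic_to_bidisc :
    ¬ ∃ (F G : ℂ × ℂ → ℂ × ℂ),
        DifferentiableOn ℂ F unitBall2 ∧ DifferentiableOn ℂ G bidisc ∧
        MapsTo F unitBall2 bidisc ∧ MapsTo G bidisc unitBall2 ∧
        (∀ z ∈ unitBall2, G (F z) = z) ∧ (∀ w ∈ bidisc, F (G w) = w) := by
  rintro ⟨F₀, G₀, hF₀d, hG₀d, hF₀m, hG₀m, hGF₀, hFG₀⟩
  have hoB : IsOpen unitBall2 := isOpen_lt (by fun_prop) continuous_const
  have hoD : IsOpen bidisc := by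
    have h : bidisc = {z : ℂ × ℂ | ‖z.1‖ < 1} ∩ {z : ℂ × ℂ | ‖z.2‖ < 1} := rfl
    rw [h]
    exact (isOpen_lt (by fun_prop) continuous_const).inter
      (isOpen_lt (by fun_prop) continuous_const)
  have h0B : (0 : ℂ × ℂ) ∈ unitBall2 := by simp [unitBall2]
  have h0D : (0 : ℂ × ℂ) ∈ bidisc := by simp [bidisc]
  set w₀ := F₀ 0 with hw₀
  obtain ⟨ha1, ha2⟩ := hF₀m h0B
  have ha1' : ‖-w₀.1‖ < 1 := by rwa [norm_neg]
  have ha2' : ‖-w₀.2‖ < 1 := by rwa [norm_neg]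
  set Φ : ℂ × ℂ → ℂ × ℂ := fun w => (mob w₀.1 w.1, mob w₀.2 w.2) with hΦdef
  set Ψ : ℂ × ℂ → ℂ × ℂ := fun w => (mob (-w₀.1) w.1, mob (-w₀.2) w.2) with hΨdef
  have hΦm : MapsTo Φ bidisc bidisc := fun w hw => ⟨mob_mapsTo ha1 hw.1, mob_mapsTo ha2 hw.2⟩
  have hΨm : MapsTo Ψ bidisc bidisc := fun w hw => ⟨mob_mapsTo ha1' hw.1, mob_mapsTo ha2' hw.2⟩
  have hΨΦ : ∀ w ∈ bidisc, Ψ (Φ w) = w := fun w hw =>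
    Prod.ext (mob_inv ha1 hw.1) (mob_inv ha2 hw.2)
  have hΦΨ : ∀ w ∈ bidisc, Φ (Ψ w) = w := by
    intro w hw
    have h1 := mob_inv ha1' hw.1
    have h2 := mob_inv ha2' hw.2
    rw [neg_neg] at h1 h2
    exact Prod.ext h1 h2
  have hΦd : DifferentiableOn ℂ Φ bidisc := by
    intro w hw
    exact (DifferentiableAt.prodMk ((mob_diffAt ha1 hw.1).comp w differentiableAt_fst)
      ((mob_diffAt ha2 hw.2).comp w differentiableAt_snd)).differentiableWithinAt
  have hΨd : DifferentiableOn ℂ Ψ bidisc := by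
    intro w hw
    exact (DifferentiableAt.prodMk ((mob_diffAt ha1' hw.1).comp w differentiableAt_fst)
      ((mob_diffAt ha2' hw.2).comp w differentiableAt_snd)).differentiableWithinAt
  set F : ℂ × ℂ → ℂ × ℂ := Φ ∘ F₀ with hFdef
  set G : ℂ × ℂ → ℂ × ℂ := G₀ ∘ Ψ with hGdef
  have hFd : DifferentiableOn ℂ F unitBall2 := hΦd.comp hF₀d hF₀m
  have hGd : DifferentiableOn ℂ G bidisc := hG₀d.comp hΨd hΨm
  have hFm : MapsTo F unitBall2 bidisc := hΦm.comp hF₀m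
  have hGm : MapsTo G bidisc unitBall2 := hG₀m.comp hΨm
  have hGF : ∀ z ∈ unitBall2, G (F z) = z := by
    intro z hz
    show G₀ (Ψ (Φ (F₀ z))) = z
    rw [hΨΦ _ (hF₀m hz), hGF₀ z hz]
  have hFG : ∀ w ∈ bidisc, F (G w) = w := by
    intro w hw
    show Φ (F₀ (G₀ (Ψ w))) = w
    rw [hFG₀ _ (hΨm hw), hΦΨ w hw]
  have hF0 : F 0 = 0 := by
    show Φ (F₀ 0) = 0
    rw [← hw₀]
    exact Prod.ext (mob_self _) (mob_self _)
  have hG0 : G 0 = 0 := by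
    show G₀ (Ψ 0) = 0
    have h : Ψ 0 = w₀ := Prod.ext (mob_zero w₀.1) (mob_zero w₀.2)
    rw [h, hw₀]
    exact hGF₀ 0 h0B
  -- derivatives at 0
  set L := fderiv ℂ F 0 with hLdef
  set M := fderiv ℂ G 0 with hMdef
  have hLat : HasFDerivAt F L 0 :=
    ((hFd 0 h0B).differentiableAt (hoB.mem_nhds h0B)).hasFDerivAt
  have hMat : HasFDerivAt G M 0 :=
    ((hGd 0 h0D).differentiableAt (hoD.mem_nhds h0D)).hasFDerivAt
  have hML : ∀ x, M (L x) = x := by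
    have hMat' : HasFDerivAt G M (F 0) := by rwa [hF0]
    have hcomp : HasFDerivAt (G ∘ F) (M.comp L) 0 := hMat'.comp 0 hLat
    have heq : id =ᶠ[nhds (0 : ℂ × ℂ)] (G ∘ F) := by
      filter_upwards [hoB.mem_nhds h0B] with z hz
      exact (hGF z hz).symm
    have h2 := (hcomp.congr_of_eventuallyEq heq).unique (hasFDerivAt_id 0)
    intro x
    have := DFunLike.congr_fun h2 x
    simpa using this
  have hLM : ∀ x, L (M x) = x := by
    have hLat' : HasFDerivAt F L (G 0) := by rwa [hG0]
    have hcomp : HasFDerivAt (F ∘ G) (L.comp M) 0 := hLat'.comp 0 hMat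
    have heq : id =ᶠ[nhds (0 : ℂ × ℂ)] (F ∘ G) := by
      filter_upwards [hoD.mem_nhds h0D] with w hw
      exact (hFG w hw).symm
    have h2 := (hcomp.congr_of_eventuallyEq heq).unique (hasFDerivAt_id 0)
    intro x
    have := DFunLike.congr_fun h2 x
    simpa using this
  have cA := claimA hFd hFm hF0 hLat
  have cB := claimB hGd hGm hG0 hMat
  -- the rigidity computation
  have key : ∀ t : ℂ, ‖t‖ ≤ 1 → ‖(M (1, t)).1‖ ^ 2 + ‖(M (1, t)).2‖ ^ 2 = 1 := by
    intro t ht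
    have hnorm : ‖((1 : ℂ), t)‖ = 1 := by
      rw [Prod.norm_def]
      norm_num
      exact ht
    have up : ‖(M (1, t)).1‖ ^ 2 + ‖(M (1, t)).2‖ ^ 2 ≤ 1 := by
      have h := cB (1, t)
      rw [hnorm] at h
      simpa using h
    have down : 1 ≤ ‖(M (1, t)).1‖ ^ 2 + ‖(M (1, t)).2‖ ^ 2 := by
      have h := cA (M (1, t))
      rw [hLM (1, t), hnorm] at h
      simpa using h
    linarith
  have hdecomp : ∀ t : ℂ, M (1, t) = M (1, 0) + t • M (0, 1) := by
    intro t
    have h : ((1 : ℂ), t) = (1, 0) + t • ((0 : ℂ), (1 : ℂ)) := by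
      simp [Prod.ext_iff]
    rw [h, map_add, map_smul]
  have par : ∀ u v : ℂ, ‖u + v‖ ^ 2 + ‖u - v‖ ^ 2 = 2 * ‖u‖ ^ 2 + 2 * ‖v‖ ^ 2 := by
    intro u v
    simp only [Complex.sq_norm, Complex.normSq_apply,
      Complex.add_re, Complex.add_im, Complex.sub_re, Complex.sub_im]
    ring
  have e0 := key 0 (by simp)
  have e1 := key 1 (by simp)
  have e2 := key (-1) (by simp)
  set a := M (1, 0) with hadef
  set b := M (0, 1) with hbdef
  have h1' : M (1, (1 : ℂ)) = a + b := by rw [hdecomp]; simp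
  have h2' : M (1, (-1 : ℂ)) = a - b := by rw [hdecomp]; simp; abel
  rw [h1'] at e1
  rw [h2'] at e2
  simp only [Prod.fst_add, Prod.snd_add, Prod.fst_sub, Prod.snd_sub] at e1 e2
  have p1 := par a.1 b.1
  have p2 := par a.2 b.2
  have hb1 : ‖b.1‖ ^ 2 + ‖b.2‖ ^ 2 = 0 := by linarith
  have hbz : b = 0 := by
    have h1 : b.1 = 0 := by
      have := norm_nonneg b.1
      have := norm_nonneg b.2
      have : ‖b.1‖ = 0 := by nlinarith
      exact norm_eq_zero.mp this
    have h2 : b.2 = 0 := by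
      have := norm_nonneg b.1
      have := norm_nonneg b.2
      have : ‖b.2‖ = 0 := by nlinarith
      exact norm_eq_zero.mp this
    exact Prod.ext h1 h2
  have hcontra : ((0 : ℂ), (1 : ℂ)) = L b := (hLM _).symm
  rw [hbz, map_zero] at hcontra
  exact one_ne_zero (congrArg Prod.snd hcontra)
end

section
/- Let Ω ⊆ ℂ^{n+1} be a bounded domain such that Aut(Ω) is not compact in the compact-open topology. Then there exist a point p ∈ ∂Ω, a point q ∈ Ω, and a sequence φ_j ∈ Aut(Ω) such that φ_j(q) → p as j → ∞. -/
open Set Filter Topology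

variable {E : Type*} [NormedAddCommGroup E] [NormedSpace ℂ E]

/-- `φ` is a holomorphic automorphism of `Ω`: a holomorphic bijection of `Ω` onto
itself with holomorphic inverse. -/
def IsAut (Ω : Set E) (φ : E → E) : Prop :=
  DifferentiableOn ℂ φ Ω ∧ Set.BijOn φ Ω Ω ∧
    ∃ ψ : E → E, DifferentiableOn ℂ ψ Ω ∧ (∀ z ∈ Ω, ψ (φ z) = z) ∧ ∀ z ∈ Ω, φ (ψ z) = z

/-- The automorphism group `Aut(Ω)`, realized as a set of continuous maps `Ω → E`;
the space `C(Ω, E)` carries the compact-open topology. -/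
def AutSet (Ω : Set E) : Set C(Ω, E) :=
  { f | ∃ φ : E → E, IsAut Ω φ ∧ ∀ x : Ω, f x = φ x }

variable {F : Type*} [NormedAddCommGroup F] [NormedSpace ℂ F]

/-- Several-variable Schwarz-type estimate, via restriction to complex lines. -/
lemma schwarz_dist' {f : E → F} {c : E} {R M : ℝ} (hR : 0 < R)
    (hd : DifferentiableOn ℂ f (Metric.ball c R))
    (hM : ∀ w ∈ Metric.ball c R, dist (f w) (f c) < M)
    {z : E} (hz : z ∈ Metric.ball c R) :
    dist (f z) (f c) ≤ M / R * dist z c := by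
  rcases eq_or_ne z c with rfl | hne
  · simp
  set u := z - c with hu
  have hu0 : u ≠ 0 := sub_ne_zero.2 hne
  have hnu : 0 < ‖u‖ := norm_pos_iff.2 hu0
  have huR : ‖u‖ < R := by simpa [hu, dist_eq_norm] using hz
  set ρ : ℝ := R / ‖u‖ with hρ
  have hρ0 : 0 < ρ := div_pos hR hnu
  have hmap : ∀ ζ : ℂ, ζ ∈ Metric.ball (0:ℂ) ρ → c + ζ • u ∈ Metric.ball c R := by
    intro ζ hζ
    simp only [Metric.mem_ball, dist_eq_norm] at hζ ⊢
    rw [add_sub_cancel_left, norm_smul]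
    calc ‖ζ‖ * ‖u‖ < ρ * ‖u‖ := by
          apply mul_lt_mul_of_pos_right _ hnu
          simpa using hζ
      _ = R := by rw [hρ, div_mul_cancel₀ R hnu.ne']
  set g : ℂ → F := fun ζ => f (c + ζ • u) with hg
  have hgd : DifferentiableOn ℂ g (Metric.ball (0:ℂ) ρ) := by
    apply hd.comp
    · intro ζ _
      exact ((differentiable_id.smul_const u).const_add c).differentiableAt.differentiableWithinAt
    · intro ζ hζ; exact hmap ζ hζ
  have hg0 : g 0 = f c := by simp [hg]
  have hgm : Set.MapsTo g (Metric.ball (0:ℂ) ρ) (Metric.ball (g 0) M) := by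
    intro ζ hζ
    rw [hg0]
    exact Metric.mem_ball.2 (hM _ (hmap ζ hζ))
  have h1 : (1:ℂ) ∈ Metric.ball (0:ℂ) ρ := by
    simp only [Metric.mem_ball, dist_zero_right, norm_one]
    rw [hρ, lt_div_iff₀ hnu, one_mul]
    exact huR
  have key := Complex.dist_le_div_mul_dist_of_mapsTo_ball hgd (hgm.mono_right Metric.ball_subset_closedBall) h1
  have hg1 : g 1 = f z := by simp [hg, hu]
  rw [hg1, hg0] at key
  have : dist z c = ‖u‖ := by rw [dist_eq_norm]
  rw [this]
  calc dist (f z) (f c) ≤ M / ρ * dist (1:ℂ) 0 := key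
    _ = M / R * ‖u‖ := by
        simp only [dist_zero_right, norm_one, mul_one, hρ]
        field_simp

/-- Cauchy-type estimate for the Fréchet derivative, via restriction to complex lines. -/
lemma schwarz_fderiv' {f : E → F} {c : E} {R M : ℝ} (hR : 0 < R)
    (hd : DifferentiableOn ℂ f (Metric.ball c R))
    (hM : ∀ w ∈ Metric.ball c R, dist (f w) (f c) < M) :
    ‖fderiv ℂ f c‖ ≤ M / R := by
  have hM0 : 0 < M := lt_of_le_of_lt dist_nonneg (hM c (Metric.mem_ball_self hR))
  have hdc : DifferentiableAt ℂ f c :=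
    (hd c (Metric.mem_ball_self hR)).differentiableAt
      (Metric.isOpen_ball.mem_nhds (Metric.mem_ball_self hR))
  refine ContinuousLinearMap.opNorm_le_bound _ (by positivity) fun v => ?_
  rcases eq_or_ne v 0 with rfl | hv
  · simp
  have hnv : 0 < ‖v‖ := norm_pos_iff.2 hv
  set ρ : ℝ := R / ‖v‖ with hρ
  have hρ0 : 0 < ρ := div_pos hR hnv
  have hmap : ∀ ζ : ℂ, ζ ∈ Metric.ball (0:ℂ) ρ → c + ζ • v ∈ Metric.ball c R := by
    intro ζ hζ
    simp only [Metric.mem_ball, dist_eq_norm] at hζ ⊢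
    rw [add_sub_cancel_left, norm_smul]
    calc ‖ζ‖ * ‖v‖ < ρ * ‖v‖ := by
          apply mul_lt_mul_of_pos_right _ hnv
          simpa using hζ
      _ = R := by rw [hρ, div_mul_cancel₀ R hnv.ne']
  set g : ℂ → F := fun ζ => f (c + ζ • v) with hg
  have hgd : DifferentiableOn ℂ g (Metric.ball (0:ℂ) ρ) := by
    apply hd.comp
    · intro ζ _
      exact ((differentiable_id.smul_const v).const_add c).differentiableAt.differentiableWithinAt
    · intro ζ hζ; exact hmap ζ hζ
  have hg0 : g 0 = f c := by simp [hg]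
  have hgm : Set.MapsTo g (Metric.ball (0:ℂ) ρ) (Metric.ball (g 0) M) := by
    intro ζ hζ
    rw [hg0]
    exact Metric.mem_ball.2 (hM _ (hmap ζ hζ))
  have hder : HasDerivAt g (fderiv ℂ f c v) 0 := by
    have h1 : HasFDerivAt f (fderiv ℂ f c) (c + (0:ℂ) • v) := by
      simpa using hdc.hasFDerivAt
    have h2 : HasDerivAt (fun ζ : ℂ => c + ζ • v) v 0 := by
      simpa using ((hasDerivAt_id (0:ℂ)).smul_const v).const_add c
    exact h1.comp_hasDerivAt 0 h2
  have key := Complex.norm_deriv_le_div_of_mapsTo_ball hgd (hgm.mono_right Metric.ball_subset_closedBall) hρ0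
  rw [hder.deriv] at key
  calc ‖fderiv ℂ f c v‖ ≤ M / ρ := key
    _ = M / R * ‖v‖ := by rw [hρ]; field_simp

/-- A locally uniform limit of holomorphic maps on an open set is holomorphic
(several variables). -/
lemma differentiableOn_of_tlu [ProperSpace E] [CompleteSpace F]
    {Ω : Set E} (hΩ : IsOpen Ω) {φ : ℕ → E → F} {g : E → F}
    (hφ : ∀ j, DifferentiableOn ℂ (φ j) Ω)
    (hconv : TendstoLocallyUniformlyOn φ g atTop Ω) :
    DifferentiableOn ℂ g Ω := by
  intro z₀ hz₀
  obtain ⟨ε, hε, hball⟩ := Metric.isOpen_iff.1 hΩ z₀ hz₀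
  set r : ℝ := ε / 4 with hr
  have hr0 : 0 < r := by positivity
  have hsub2 : Metric.closedBall z₀ (2 * r) ⊆ Ω := by
    refine subset_trans (Metric.closedBall_subset_ball ?_) hball
    rw [hr]; linarith
  have hsub1 : Metric.ball z₀ r ⊆ Ω := by
    refine subset_trans (Metric.ball_subset_ball ?_) (subset_trans Metric.ball_subset_closedBall hsub2)
    linarith
  have hdiffAt : ∀ j, ∀ x ∈ Ω, DifferentiableAt ℂ (φ j) x := fun j x hx =>
    (hφ j x hx).differentiableAt (hΩ.mem_nhds hx)
  have hK : IsCompact (Metric.closedBall z₀ (2 * r)) := isCompact_closedBall _ _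
  have hU : TendstoUniformlyOn φ g atTop (Metric.closedBall z₀ (2 * r)) :=
    (tendstoLocallyUniformlyOn_iff_forall_isCompact hΩ).1 hconv _ hsub2 hK
  have hUC : UniformCauchySeqOn φ atTop (Metric.closedBall z₀ (2 * r)) :=
    hU.uniformCauchySeqOn
  set f' : ℕ → E → (E →L[ℂ] F) := fun j w => fderiv ℂ (φ j) w with hf'
  have hf'c : UniformCauchySeqOn f' atTop (Metric.ball z₀ r) := by
    rw [Metric.uniformCauchySeqOn_iff]
    intro δ hδ
    obtain ⟨N, hN⟩ := Metric.uniformCauchySeqOn_iff.1 hUC (δ * r / 8) (by positivity)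
    refine ⟨N, fun m hm n hn w hw => ?_⟩
    have hballw : Metric.ball w r ⊆ Metric.closedBall z₀ (2 * r) := by
      intro y hy
      rw [Metric.mem_closedBall]
      calc dist y z₀ ≤ dist y w + dist w z₀ := dist_triangle _ _ _
        _ ≤ r + r := add_le_add (le_of_lt hy) (le_of_lt hw)
        _ = 2 * r := by ring
    have hballwΩ : Metric.ball w r ⊆ Ω := subset_trans hballw hsub2
    have hwΩ : w ∈ Ω := hballwΩ (Metric.mem_ball_self hr0)
    have hdh : DifferentiableOn ℂ (fun y => φ m y - φ n y) (Metric.ball w r) :=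
      fun y hy => ((hdiffAt m y (hballwΩ hy)).sub (hdiffAt n y (hballwΩ hy))).differentiableWithinAt
    have hMh : ∀ y ∈ Metric.ball w r,
        dist (φ m y - φ n y) (φ m w - φ n w) < δ * r / 2 := by
      intro y hy
      have h1 : dist (φ m y) (φ n y) < δ * r / 8 := hN m hm n hn y (hballw hy)
      have h2 : dist (φ m w) (φ n w) < δ * r / 8 :=
        hN m hm n hn w (hballw (Metric.mem_ball_self hr0))
      calc dist (φ m y - φ n y) (φ m w - φ n w)
          ≤ dist (φ m y - φ n y) 0 + dist (0 : F) (φ m w - φ n w) := dist_triangle _ _ _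
        _ = dist (φ m y) (φ n y) + dist (φ m w) (φ n w) := by
            simp [dist_eq_norm, norm_sub_rev]
        _ < δ * r / 8 + δ * r / 8 := add_lt_add h1 h2
        _ ≤ δ * r / 2 := by nlinarith [mul_pos hδ hr0]
    have hkey := schwarz_fderiv' hr0 hdh hMh
    have hfd : fderiv ℂ (fun y => φ m y - φ n y) w = f' m w - f' n w :=
      fderiv_sub (hdiffAt m w hwΩ) (hdiffAt n w hwΩ)
    rw [hfd] at hkey
    rw [dist_eq_norm]
    calc ‖f' m w - f' n w‖ ≤ δ * r / 2 / r := hkey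
      _ = δ / 2 := by field_simp
      _ < δ := by linarith
  have hcauchy : ∀ w ∈ Metric.ball z₀ r, CauchySeq (fun j => f' j w) := by
    intro w hw
    rw [Metric.cauchySeq_iff]
    intro δ hδ
    obtain ⟨N, hN⟩ := Metric.uniformCauchySeqOn_iff.1 hf'c δ hδ
    exact ⟨N, fun m hm n hn => hN m hm n hn w hw⟩
  set g' : E → (E →L[ℂ] F) := fun w => limUnder atTop (fun j => f' j w) with hg'
  have hg'tend : ∀ w ∈ Metric.ball z₀ r, Tendsto (fun j => f' j w) atTop (𝓝 (g' w)) :=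
    fun w hw => (hcauchy w hw).tendsto_limUnder
  have hf'u : TendstoUniformlyOn f' g' atTop (Metric.ball z₀ r) :=
    hf'c.tendstoUniformlyOn_of_tendsto hg'tend
  have := hasFDerivAt_of_tendstoUniformlyOn Metric.isOpen_ball hf'u
    (fun j x hx => (hdiffAt j x (hsub1 hx)).hasFDerivAt)
    (fun x hx => hconv.tendsto_at (hsub1 hx)) (Metric.mem_ball_self hr0)
  exact this.differentiableAt.differentiableWithinAt

/-- The inverse of a holomorphic automorphism is a holomorphic automorphism. -/
lemma IsAut.inv {Ω : Set E} {φ ψ : E → E} (h : IsAut Ω φ)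
    (hψd : DifferentiableOn ℂ ψ Ω)
    (hl : ∀ z ∈ Ω, ψ (φ z) = z) (hr : ∀ z ∈ Ω, φ (ψ z) = z) : IsAut Ω ψ := by
  obtain ⟨hφd, hφb, _⟩ := h
  refine ⟨hψd, ⟨?_, ?_, ?_⟩, φ, hφd, hr, hl⟩
  · intro z hz
    obtain ⟨w, hw, hwz⟩ := hφb.surjOn hz
    rw [← hwz, hl w hw]
    exact hw
  · intro a ha b hb hab
    rw [← hr a ha, ← hr b hb, hab]
  · intro w hw
    exact ⟨φ w, hφb.mapsTo hw, hl w hw⟩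

/-- Maps-to version: the inverse maps `Ω` into `Ω`. -/
lemma IsAut.inv_mapsTo {Ω : Set E} {φ ψ : E → E} (h : IsAut Ω φ)
    (hl : ∀ z ∈ Ω, ψ (φ z) = z) : Set.MapsTo ψ Ω Ω := by
  intro z hz
  obtain ⟨w, hw, hwz⟩ := h.2.1.surjOn hz
  rw [← hwz, hl w hw]
  exact hw

/-- Equicontinuity of the automorphism group of a bounded domain, via the Schwarz lemma. -/
lemma autSet_equicontinuous {Ω : Set E} (hΩ : IsOpen Ω) {C : ℝ}
    (hC : ∀ a ∈ Ω, ∀ b ∈ Ω, dist a b < C) :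
    Equicontinuous (fun (f : AutSet Ω) (x : ↥Ω) => (f : C(Ω, E)) x) := by
  intro x
  rw [Metric.equicontinuousAt_iff]
  intro ε hε
  obtain ⟨R, hR0, hball⟩ := Metric.isOpen_iff.1 hΩ x.1 x.2
  have hC0 : 0 < C := by simpa using hC x.1 x.2 x.1 x.2
  refine ⟨min (R / 2) (ε * R / (2 * C)), lt_min (by positivity) (by positivity), ?_⟩
  intro y hy f
  obtain ⟨φ, hφ, hfφ⟩ := f.2
  have hyx : dist (y : E) (x : E) < R := by
    rw [← Subtype.dist_eq]
    calc dist y x < min (R / 2) (ε * R / (2 * C)) := hy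
      _ ≤ R / 2 := min_le_left _ _
      _ < R := by linarith
  have hyball : (y : E) ∈ Metric.ball (x : E) R := Metric.mem_ball.2 hyx
  have hd : DifferentiableOn ℂ φ (Metric.ball (x : E) R) := hφ.1.mono hball
  have hM : ∀ w ∈ Metric.ball (x : E) R, dist (φ w) (φ x) < C := fun w hw =>
    hC _ (hφ.2.1.mapsTo (hball hw)) _ (hφ.2.1.mapsTo x.2)
  have key := schwarz_dist' hR0 hd hM hyball
  rw [hfφ x, hfφ y, dist_comm (φ x) (φ y)]
  calc dist (φ y) (φ x) ≤ C / R * dist (y : E) (x : E) := key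
    _ ≤ C / R * (ε * R / (2 * C)) := by
        apply mul_le_mul_of_nonneg_left _ (by positivity)
        rw [← Subtype.dist_eq]
        exact le_of_lt (lt_of_lt_of_le hy (min_le_right _ _))
    _ = ε / 2 := by field_simp
    _ < ε := by linarith

/-- The closure of the automorphism group of a bounded domain is compact in the
compact-open topology (Montel / Arzelà–Ascoli). -/
lemma autSet_closure_isCompact [ProperSpace E] {Ω : Set E} (hΩ : IsOpen Ω)
    [LocallyCompactSpace ↥Ω]
    (hbd : Bornology.IsBounded Ω) {C : ℝ} (hC : ∀ a ∈ Ω, ∀ b ∈ Ω, dist a b < C) :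
    IsCompact (closure (AutSet Ω)) := by
  have hemb : IsClosedEmbedding
      (UniformOnFun.ofFun {K : Set ↥Ω | IsCompact K} ∘ (fun (f : C(↥Ω, E)) (x : ↥Ω) => f x)) := by
    refine ⟨ContinuousMap.isUniformEmbedding_toUniformOnFunIsCompact.isEmbedding, ?_⟩
    have hr : range (UniformOnFun.ofFun {K : Set ↥Ω | IsCompact K} ∘
          fun (f : C(↥Ω, E)) (x : ↥Ω) => f x)
        = {f : UniformOnFun ↥Ω E {K | IsCompact K} | Continuous (UniformOnFun.toFun _ f)} :=
      ContinuousMap.range_toUniformOnFunIsCompact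
    rw [hr]
    exact UniformOnFun.isClosed_setOf_continuous
      CompactlyCoherentSpace.isCoherentWith
  refine ArzelaAscoli.isCompact_closure_of_isClosedEmbedding (fun K hK => hK) hemb ?_ ?_
  · intro K _
    exact (autSet_equicontinuous hΩ hC).equicontinuousOn K
  · intro K _ x _
    refine ⟨closure Ω, hbd.isCompact_closure, fun f hf => ?_⟩
    obtain ⟨φ, hφ, hfφ⟩ := hf
    rw [hfφ x]
    exact subset_closure (hφ.2.1.mapsTo x.2)

/-- Cartan's lemma: if `Ω ⊆ ℂ^{n+1}` is a bounded domain whose automorphism group is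
not compact in the compact-open topology, then there are `p ∈ ∂Ω`, `q ∈ Ω` and
automorphisms `φ_j` with `φ_j q → p`. -/
theorem cartan_noncompact_automorphism_group {n : ℕ}
    (Ω : Set (EuclideanSpace ℂ (Fin (n + 1))))
    (hopen : IsOpen Ω) (hconn : IsConnected Ω) (hbd : Bornology.IsBounded Ω)
    (hnc : ¬ IsCompact (AutSet Ω)) :
    ∃ p ∈ frontier Ω, ∃ q ∈ Ω,
      ∃ φ : ℕ → EuclideanSpace ℂ (Fin (n + 1)) → EuclideanSpace ℂ (Fin (n + 1)),
        (∀ j, IsAut Ω (φ j)) ∧ Tendsto (fun j => φ j q) atTop (𝓝 p) := by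
  classical
  by_contra hcon
  push_neg at hcon
  haveI : LocallyCompactSpace ↥Ω := hopen.locallyCompactSpace
  -- a strict diameter bound
  obtain ⟨C₀, hC₀⟩ := Metric.isBounded_iff.1 hbd
  have hC : ∀ a ∈ Ω, ∀ b ∈ Ω, dist a b < C₀ + 1 := fun a ha b hb =>
    lt_of_le_of_lt (hC₀ ha hb) (by linarith)
  -- orbit closures stay inside Ω
  have horb : ∀ q ∈ Ω, closure {y | ∃ φ, IsAut Ω φ ∧ φ q = y} ⊆ Ω := by
    intro q hq y hy
    by_contra hyΩ
    have hyfr : y ∈ frontier Ω := by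
      constructor
      · exact closure_mono (fun z hz => by obtain ⟨φ, hφ, rfl⟩ := hz; exact hφ.2.1.mapsTo hq) hy
      · rwa [hopen.interior_eq]
    obtain ⟨u, hu1, hu2⟩ := mem_closure_iff_seq_limit.1 hy
    choose Φ hΦ1 hΦ2 using hu1
    exact hcon y hyfr q hq Φ hΦ1 (by simpa only [hΦ2] using hu2)
  -- compactness of the closure of the automorphism group
  have hScl : IsCompact (closure (AutSet Ω)) := autSet_closure_isCompact hopen hbd hC
  -- a limit point outside the automorphism group
  have hnsub : ¬ closure (AutSet Ω) ⊆ AutSet Ω := by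
    intro hsub
    exact hnc (by rwa [subset_antisymm subset_closure hsub])
  obtain ⟨gt, hgtcl, hgtnot⟩ := not_subset.1 hnsub
  -- extract a sequence of automorphisms converging to `gt`
  obtain ⟨fs, hfsmem, hfstend⟩ := mem_closure_iff_seq_limit.1 hgtcl
  choose φ hφaut hφeq using hfsmem
  have hφd : ∀ j, DifferentiableOn ℂ (φ j) Ω := fun j => (hφaut j).1
  -- the inverse automorphisms
  have hψex : ∀ j, ∃ ψ, DifferentiableOn ℂ ψ Ω ∧ (∀ z ∈ Ω, ψ (φ j z) = z) ∧
      ∀ z ∈ Ω, φ j (ψ z) = z := fun j => (hφaut j).2.2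
  choose ψ hψd hψl hψr using hψex
  have hψaut : ∀ j, IsAut Ω (ψ j) := fun j => (hφaut j).inv (hψd j) (hψl j) (hψr j)
  set gs : ℕ → C(↥Ω, (EuclideanSpace ℂ (Fin (n + 1)))) := fun j =>
    ⟨fun x => ψ j x, (hψd j).continuousOn.comp_continuous continuous_subtype_val fun x => x.2⟩
    with hgs
  have hgsmem : ∀ j, gs j ∈ AutSet Ω := fun j => ⟨ψ j, hψaut j, fun _ => rfl⟩
  obtain ⟨ht, htcl, k, hk, httend⟩ :=
    hScl.isSeqCompact fun j => subset_closure (hgsmem j)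
  -- the limit functions on all of (EuclideanSpace ℂ (Fin (n + 1)))
  set g : (EuclideanSpace ℂ (Fin (n + 1))) → (EuclideanSpace ℂ (Fin (n + 1))) := fun z => if hz : z ∈ Ω then gt ⟨z, hz⟩ else z with hgdef
  set h : (EuclideanSpace ℂ (Fin (n + 1))) → (EuclideanSpace ℂ (Fin (n + 1))) := fun z => if hz : z ∈ Ω then ht ⟨z, hz⟩ else z with hhdef
  have hgval : ∀ x : ↥Ω, g x = gt x := fun x => by
    rw [hgdef]; simp only [x.2, dif_pos]
  have hhval : ∀ x : ↥Ω, h x = ht x := fun x => by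
    rw [hhdef]; simp only [x.2, dif_pos]
  -- pointwise convergence
  have hptg : ∀ z : ↥Ω, Tendsto (fun j => φ j (z : (EuclideanSpace ℂ (Fin (n + 1))))) atTop (𝓝 (g z)) := by
    intro z
    have h1 : Tendsto (fun j => fs j z) atTop (𝓝 (gt z)) :=
      ((continuous_eval_const z).tendsto gt).comp hfstend
    rw [hgval z]
    simpa only [hφeq] using h1
  have hpth : ∀ z : ↥Ω, Tendsto (fun j => ψ (k j) (z : (EuclideanSpace ℂ (Fin (n + 1))))) atTop (𝓝 (h z)) := by
    intro z
    have h1 : Tendsto (fun j => (gs (k j)) z) atTop (𝓝 (ht z)) :=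
      ((continuous_eval_const z).tendsto ht).comp httend
    rw [hhval z]
    exact h1
  -- the limits map Ω into Ω
  have hgmem : ∀ z ∈ Ω, g z ∈ Ω := fun z hz =>
    horb z hz (mem_closure_of_tendsto (hptg ⟨z, hz⟩)
      (Eventually.of_forall fun j => ⟨φ j, hφaut j, rfl⟩))
  have hhmem : ∀ z ∈ Ω, h z ∈ Ω := fun z hz =>
    horb z hz (mem_closure_of_tendsto (hpth ⟨z, hz⟩)
      (Eventually.of_forall fun j => ⟨ψ (k j), hψaut (k j), rfl⟩))
  -- locally uniform convergence and holomorphy of the limits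
  have hlug : TendstoLocallyUniformlyOn (fun j => φ j) g atTop Ω := by
    rw [tendstoLocallyUniformlyOn_iff_tendstoLocallyUniformly_comp_coe]
    have h1 := ContinuousMap.tendsto_iff_tendstoLocallyUniformly.1 hfstend
    have he1 : (fun (j : ℕ) (x : ↥Ω) => φ j (x : (EuclideanSpace ℂ (Fin (n + 1))))) = fun j x => fs j x := by
      funext j x; rw [hφeq]
    have he2 : (g ∘ (Subtype.val : ↥Ω → (EuclideanSpace ℂ (Fin (n + 1))))) = fun x : ↥Ω => gt x := by
      funext x; exact hgval x
    rw [he1, he2]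
    exact h1
  have hluh : TendstoLocallyUniformlyOn (fun j => ψ (k j)) h atTop Ω := by
    rw [tendstoLocallyUniformlyOn_iff_tendstoLocallyUniformly_comp_coe]
    have h1 := ContinuousMap.tendsto_iff_tendstoLocallyUniformly.1 httend
    have he2 : (h ∘ (Subtype.val : ↥Ω → (EuclideanSpace ℂ (Fin (n + 1))))) = fun x : ↥Ω => ht x := by
      funext x; exact hhval x
    rw [he2]
    exact h1
  have hgd : DifferentiableOn ℂ g Ω := differentiableOn_of_tlu hopen hφd hlug
  have hhd : DifferentiableOn ℂ h Ω :=
    differentiableOn_of_tlu hopen (fun j => (hψaut (k j)).1) hluh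
  -- the identities h ∘ g = id and g ∘ h = id on Ω
  have hhg : ∀ z ∈ Ω, h (g z) = z := by
    intro z hz
    have hmemj : ∀ j, φ (k j) z ∈ Ω := fun j => (hφaut (k j)).2.1.mapsTo hz
    have hx : Tendsto (fun j => (⟨φ (k j) z, hmemj j⟩ : ↥Ω)) atTop
        (𝓝 ⟨g z, hgmem z hz⟩) := by
      rw [tendsto_subtype_rng]
      exact (hptg ⟨z, hz⟩).comp hk.tendsto_atTop
    have heval : Tendsto (fun j => (gs (k j)) ⟨φ (k j) z, hmemj j⟩) atTop
        (𝓝 (ht ⟨g z, hgmem z hz⟩)) := by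
      have := (continuous_eval.tendsto
        ((ht, ⟨g z, hgmem z hz⟩) : C(↥Ω, EuclideanSpace ℂ (Fin (n + 1))) × ↥Ω)).comp
        (httend.prodMk_nhds hx)
      simpa [Function.comp_def] using this
    have hconst : ∀ j, (gs (k j)) (⟨φ (k j) z, hmemj j⟩ : ↥Ω) = z := fun j => hψl (k j) z hz
    rw [tendsto_congr hconst] at heval
    have := tendsto_nhds_unique heval tendsto_const_nhds
    rw [hhval ⟨g z, hgmem z hz⟩]
    exact this
  have hgh : ∀ z ∈ Ω, g (h z) = z := by
    intro z hz
    have hmemj : ∀ j, ψ (k j) z ∈ Ω := fun j => (hψaut (k j)).2.1.mapsTo hz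
    have hx : Tendsto (fun j => (⟨ψ (k j) z, hmemj j⟩ : ↥Ω)) atTop
        (𝓝 ⟨h z, hhmem z hz⟩) := by
      rw [tendsto_subtype_rng]
      exact hpth ⟨z, hz⟩
    have heval : Tendsto (fun j => (fs (k j)) ⟨ψ (k j) z, hmemj j⟩) atTop
        (𝓝 (gt ⟨h z, hhmem z hz⟩)) := by
      have := (continuous_eval.tendsto
        ((gt, ⟨h z, hhmem z hz⟩) : C(↥Ω, EuclideanSpace ℂ (Fin (n + 1))) × ↥Ω)).comp
        ((hfstend.comp hk.tendsto_atTop).prodMk_nhds hx)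
      simpa [Function.comp_def] using this
    have hconst : ∀ j, (fs (k j)) (⟨ψ (k j) z, hmemj j⟩ : ↥Ω) = z := by
      intro j
      rw [hφeq]
      exact hψr (k j) z hz
    rw [tendsto_congr hconst] at heval
    have := tendsto_nhds_unique heval tendsto_const_nhds
    rw [hgval ⟨h z, hhmem z hz⟩]
    exact this
  -- hence `gt` is an automorphism, contradiction
  apply hgtnot
  refine ⟨g, ⟨hgd, ⟨fun z hz => hgmem z hz, ?_, ?_⟩, h, hhd, hhg, hgh⟩, fun x => (hgval x).symm⟩
  · intro a ha b hb hab
    rw [← hhg a ha, ← hhg b hb, hab]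
  · intro z hz
    exact ⟨h z, hhmem z hz, hgh z hz⟩
end

section
/- Every bounded domain Ω ⊆ ℂ^{n+1} with C² boundary (i.e. admitting a C² defining function ρ : ℂ^{n+1} → ℝ with Ω = {ρ < 0} and ∇ρ(p) ≠ 0 for every p ∈ ∂Ω) has at least one strongly pseudoconvex boundary point. -/
open Set Filter Topology Metric

variable {E : Type*} [NormedAddCommGroup E] [NormedSpace ℂ E]

/-- `∑ⱼ (∂ρ/∂zⱼ)(q) wⱼ`: the complex-linear part of the real derivative of `ρ`. -/
noncomputable def wirt (ρ : E → ℝ) (w : E) (q : E) : ℂ :=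
  (((fderiv ℝ ρ q) w : ℂ) - Complex.I * ((fderiv ℝ ρ q) (Complex.I • w) : ℂ)) / 2

/-- The Levi form `L_p(w) = ∑_{j,k} (∂²ρ/∂zⱼ∂z̄ₖ)(p) wⱼ w̄ₖ`. -/
noncomputable def levi (ρ : E → ℝ) (p : E) (w : E) : ℂ :=
  ((fderiv ℝ (wirt ρ w) p) w + Complex.I * ((fderiv ℝ (wirt ρ w) p) (Complex.I • w))) / 2

private lemma deriv_nonneg_of_right (g : ℝ → ℝ) (c : ℝ) (hg : HasDerivAt g c 0)
    (h0 : g 0 = 0) (hpos : ∀ t : ℝ, 0 < t → 0 ≤ g t) : 0 ≤ c := by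
  have hs : Tendsto (slope g 0) (𝓝[>] 0) (𝓝 c) :=
    (hasDerivAt_iff_tendsto_slope.mp hg).mono_left
      (nhdsWithin_mono 0 (fun x hx => ne_of_gt hx))
  refine ge_of_tendsto hs ?_
  filter_upwards [self_mem_nhdsWithin] with t ht
  have ht' : (0:ℝ) < t := ht
  rw [slope_def_field, h0, sub_zero, sub_zero]
  exact div_nonneg (hpos t ht') ht'.le

private lemma second_deriv_nonneg (φ d : ℝ → ℝ) (b : ℝ)
    (hφ : ∀ s : ℝ, HasDerivAt φ (d s) s) (hd : HasDerivAt d b 0)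
    (hpos : ∀ s : ℝ, 0 ≤ φ s) (h0 : φ 0 = 0) : 0 ≤ b := by
  by_contra hb
  push_neg at hb
  have hmin : IsLocalMin φ 0 := Filter.Eventually.of_forall (fun x => by simpa [h0] using hpos x)
  have hd0 : d 0 = 0 := hmin.hasDerivAt_eq_zero (hφ 0)
  have hs : Tendsto (slope d 0) (𝓝[>] 0) (𝓝 b) :=
    (hasDerivAt_iff_tendsto_slope.mp hd).mono_left
      (nhdsWithin_mono 0 (fun x hx => ne_of_gt hx))
  have hev : ∀ᶠ t in 𝓝[>] (0:ℝ), slope d 0 t < b/2 :=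
    hs.eventually_lt_const (by linarith)
  rw [eventually_nhdsWithin_iff, Metric.eventually_nhds_iff] at hev
  obtain ⟨δ, hδ, hδ'⟩ := hev
  set t₀ := δ/2 with ht₀def
  have ht₀ : 0 < t₀ := by positivity
  have hcont : ContinuousOn φ (Icc 0 t₀) :=
    fun s _ => (hφ s).continuousAt.continuousWithinAt
  obtain ⟨ξ, hξ, hξ'⟩ := exists_hasDerivAt_eq_slope φ d ht₀ hcont (fun x _ => hφ x)
  have h1 : 0 ≤ d ξ := by
    rw [hξ', h0, sub_zero, sub_zero]
    exact div_nonneg (hpos t₀) ht₀.le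
  have h2 : slope d 0 ξ < b/2 := by
    refine hδ' ?_ hξ.1
    rw [Real.dist_eq, sub_zero, abs_of_pos hξ.1]
    linarith [hξ.2]
  rw [slope_def_field, hd0, sub_zero, sub_zero] at h2
  have h3 : 0 ≤ d ξ / ξ := div_nonneg h1 hξ.1.le
  linarith

private lemma normsq_aux {m : ℕ} (p v : EuclideanSpace ℂ (Fin m)) (r s : ℝ) :
    ‖r • p + s • v‖^2 = r^2*‖p‖^2 + 2*(r*s)*(inner ℝ p v : ℝ) + s^2*‖v‖^2 := by
  rw [norm_add_sq_real, real_inner_smul_left, real_inner_smul_right, norm_smul, norm_smul,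
    Real.norm_eq_abs, Real.norm_eq_abs, mul_pow, mul_pow, sq_abs, sq_abs]
  ring

set_option maxHeartbeats 1000000 in
/-- Every bounded domain in `ℂ^{n+1}` with `C²` boundary has a strongly pseudoconvex
boundary point. -/
theorem exists_strongly_pseudoconvex_boundary_point {n : ℕ}
    (Ω : Set (EuclideanSpace ℂ (Fin (n + 1))))
    (hconn : IsConnected Ω) (hbd : Bornology.IsBounded Ω)
    (ρ : EuclideanSpace ℂ (Fin (n + 1)) → ℝ) (hρ : ContDiff ℝ 2 ρ)
    (hΩ : Ω = {z | ρ z < 0})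
    (hgrad : ∀ p ∈ frontier Ω, fderiv ℝ ρ p ≠ 0) :
    ∃ p ∈ frontier Ω, ∀ w : EuclideanSpace ℂ (Fin (n + 1)),
      w ≠ 0 → wirt ρ w p = 0 → 0 < (levi ρ p w).re := by
  classical
  have hρc : Continuous ρ := hρ.continuous
  have hΩopen : IsOpen Ω := by rw [hΩ]; exact isOpen_lt hρc continuous_const
  have hdρ : Differentiable ℝ ρ := hρ.differentiable (by norm_num)
  have hne : Ω.Nonempty := hconn.nonempty
  have hK : IsCompact (closure Ω) := hbd.isCompact_closure
  obtain ⟨p, hpK, hpmax⟩ := hK.exists_isMaxOn hne.closure continuous_norm.continuousOn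
  set R := ‖p‖ with hRdef
  -- R is positive
  obtain ⟨z, hz⟩ := hne
  obtain ⟨r, hr, hball⟩ := Metric.isOpen_iff.mp hΩopen z hz
  have hR : 0 < R := by
    set e : EuclideanSpace ℂ (Fin (n+1)) := EuclideanSpace.single 0 1 with hedef
    have he : ‖e‖ = 1 := by
      rw [hedef, EuclideanSpace.norm_single]; norm_num
    have hz2 : z + (r/2) • e ∈ Ω := by
      apply hball
      rw [Metric.mem_ball, dist_eq_norm, add_sub_cancel_left, norm_smul, he]
      rw [Real.norm_eq_abs, abs_of_pos (by linarith)]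
      linarith
    have h1 : ‖z‖ ≤ R := hpmax (subset_closure hz)
    have h2 : ‖z + (r/2) • e‖ ≤ R := hpmax (subset_closure hz2)
    have h3 : ‖(r/2) • e‖ = r/2 := by
      rw [norm_smul, he, Real.norm_eq_abs, abs_of_pos (by linarith)]; ring
    have h4 : ‖(r/2) • e‖ ≤ ‖z + (r/2) • e‖ + ‖z‖ := by
      calc ‖(r/2) • e‖ = ‖(z + (r/2) • e) - z‖ := by rw [add_sub_cancel_left]
      _ ≤ ‖z + (r/2) • e‖ + ‖z‖ := norm_sub_le _ _
    rw [h3] at h4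
    linarith
  have hRne : R ≠ 0 := ne_of_gt hR
  -- p is not in Ω
  have hpnot : p ∉ Ω := by
    intro hp
    obtain ⟨δ, hδ, hball'⟩ := Metric.isOpen_iff.mp hΩopen p hp
    set t := min (δ/(2*R)) 1 with htdef
    have ht : 0 < t := lt_min (by positivity) one_pos
    have hq : p + t • p ∈ Ω := by
      apply hball'
      rw [Metric.mem_ball, dist_eq_norm, add_sub_cancel_left, norm_smul, Real.norm_eq_abs,
        abs_of_pos ht]
      have h5 : t * R ≤ (δ/(2*R)) * R := mul_le_mul_of_nonneg_right (min_le_left _ _) hR.le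
      have h6 : (δ/(2*R)) * R = δ/2 := by field_simp
      linarith
    have h7 : ‖p + t • p‖ ≤ R := hpmax (subset_closure hq)
    have h8 : ‖p + t • p‖ = (1+t)*R := by
      rw [show p + t • p = (1+t) • p by rw [add_smul, one_smul], norm_smul, Real.norm_eq_abs,
        abs_of_pos (by linarith)]
    nlinarith
  have hρp : ρ p = 0 := by
    have h1 : 0 ≤ ρ p := by
      by_contra h
      push_neg at h
      exact hpnot (by rw [hΩ]; exact h)
    have h2 : ρ p ≤ 0 := by
      have hsub : closure Ω ⊆ {z | ρ z ≤ 0} := by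
        apply closure_minimal _ (isClosed_le hρc continuous_const)
        rw [hΩ]; exact fun z hz => le_of_lt (show ρ z < 0 from hz)
      exact hsub hpK
    linarith
  have hfront : p ∈ frontier Ω := by
    rw [frontier, hΩopen.interior_eq]; exact ⟨hpK, hpnot⟩
  have key0 : ∀ z : EuclideanSpace ℂ (Fin (n+1)), R < ‖z‖ → 0 ≤ ρ z := by
    intro z hz'
    by_contra h
    push_neg at h
    have hzΩ : z ∈ Ω := by rw [hΩ]; exact h
    exact absurd (hpmax (subset_closure hzΩ)) (not_le.mpr hz')
  -- from squared norm comparison to norm comparison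
  have sq_lift : ∀ x : EuclideanSpace ℂ (Fin (n+1)), R^2 < ‖x‖^2 → R < ‖x‖ := by
    intro x hx
    by_contra h
    push_neg at h
    nlinarith [norm_nonneg x]
  -- Step A: the differential of ρ at p kills vectors orthogonal to p
  have hF : ∀ v : EuclideanSpace ℂ (Fin (n+1)), (inner ℝ p v : ℝ) = 0 → fderiv ℝ ρ p v = 0 := by
    intro v hv
    set γ : ℝ → EuclideanSpace ℂ (Fin (n+1)) := fun t => (1+t^2) • p + t • v with hγdef
    have hγ0 : γ 0 = p := by simp [hγdef]
    have hγnorm : ∀ t : ℝ, t ≠ 0 → R < ‖γ t‖ := by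
      intro t ht
      apply sq_lift
      rw [hγdef]
      rw [normsq_aux p v (1+t^2) t, hv, ← hRdef]
      have h9 : 0 ≤ t^2*‖v‖^2 := by positivity
      have ht2 : 0 < t^2 := by positivity
      nlinarith [mul_pos ht2 (pow_pos hR 2), mul_nonneg (mul_nonneg ht2.le ht2.le) (pow_pos hR 2).le]
    have hgpos : ∀ t : ℝ, 0 ≤ ρ (γ t) := by
      intro t
      rcases eq_or_ne t 0 with h | h
      · rw [h, hγ0, hρp]
      · exact key0 _ (hγnorm t h)
    have hγd : HasDerivAt γ v 0 := by
      have h1 : HasDerivAt (fun t : ℝ => 1+t^2) (0 + 2*0^1) 0 :=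
        (hasDerivAt_const 0 (1:ℝ)).add (hasDerivAt_pow 2 0)
      have h2 := (h1.smul_const p).add ((hasDerivAt_id (0:ℝ)).smul_const v)
      refine h2.congr_deriv ?_
      simp
    have hcomp : HasDerivAt (fun t => ρ (γ t)) (fderiv ℝ ρ p v) 0 := by
      have hfd : HasFDerivAt ρ (fderiv ℝ ρ p) (γ 0) := hγ0 ▸ (hdρ p).hasFDerivAt
      exact hfd.comp_hasDerivAt 0 hγd
    have hmin : IsLocalMin (fun t => ρ (γ t)) 0 :=
      Filter.Eventually.of_forall (fun x => by
        simpa [hγ0, hρp] using hgpos x)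
    exact hmin.hasDerivAt_eq_zero hcomp
  -- Step B: decomposition of the differential
  set cder := fderiv ℝ ρ p p with hcdef
  have hdecomp : ∀ v : EuclideanSpace ℂ (Fin (n+1)),
      fderiv ℝ ρ p v = ((inner ℝ p v : ℝ)/R^2) * cder := by
    intro v
    set a := (inner ℝ p v : ℝ)/R^2 with hadef
    have hv' : (inner ℝ p (v - a • p) : ℝ) = 0 := by
      rw [inner_sub_right, real_inner_smul_right, real_inner_self_eq_norm_sq, ← hRdef, hadef]
      field_simp
      simp
    have h0 := hF _ hv'
    have hsplit : v = a • p + (v - a • p) := by abel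
    calc fderiv ℝ ρ p v = fderiv ℝ ρ p (a • p + (v - a • p)) := by rw [← hsplit]
      _ = a * cder := by rw [map_add, map_smul, h0, add_zero, smul_eq_mul]
  -- Step C: the radial derivative is positive
  have hcpos : 0 < cder := by
    have hge : 0 ≤ cder := by
      apply deriv_nonneg_of_right (fun t => ρ (p + t • p)) cder
      · have hγd : HasDerivAt (fun t : ℝ => p + t • p) p 0 := by
          have h2 := (hasDerivAt_const (0:ℝ) p).add ((hasDerivAt_id (0:ℝ)).smul_const p)
          refine h2.congr_deriv ?_
          simp
        have hfd : HasFDerivAt ρ (fderiv ℝ ρ p) ((fun t : ℝ => p + t • p) 0) := by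
          simpa using (hdρ p).hasFDerivAt
        exact hfd.comp_hasDerivAt 0 hγd
      · simp [hρp]
      · intro t ht
        apply key0
        have h8 : ‖p + t • p‖ = (1+t)*R := by
          rw [show p + t • p = (1+t) • p by rw [add_smul, one_smul], norm_smul,
            Real.norm_eq_abs, abs_of_pos (by linarith)]
        rw [h8]
        nlinarith
    rcases hge.lt_or_eq with h | h
    · exact h
    · exfalso
      apply hgrad p hfront
      apply ContinuousLinearMap.ext
      intro v
      rw [ContinuousLinearMap.zero_apply, hdecomp v, ← h, mul_zero]
  -- the second derivative data
  set T := fderiv ℝ (fderiv ℝ ρ) p with hTdef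
  have hT : HasFDerivAt (fderiv ℝ ρ) T p := by
    have h1 : ContDiff ℝ 1 (fderiv ℝ ρ) := hρ.fderiv_right (by norm_num)
    exact (h1.differentiable one_ne_zero p).hasFDerivAt
  have hclm : ∀ u : EuclideanSpace ℂ (Fin (n+1)),
      HasFDerivAt (fun q => fderiv ℝ ρ q u) (T.flip u) p := by
    intro u
    have h2 := hT.clm_apply (hasFDerivAt_const u p)
    refine h2.congr_fderiv ?_
    simp
  refine ⟨p, hfront, ?_⟩
  intro w hw hwirt
  -- the first complex-tangential derivatives vanish
  have key1 : fderiv ℝ ρ p w = 0 ∧ fderiv ℝ ρ p (Complex.I • w) = 0 := by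
    have h3 : (((fderiv ℝ ρ p) w : ℂ) - Complex.I * ((fderiv ℝ ρ p) (Complex.I • w) : ℂ)) / 2
        = 0 := hwirt
    rw [div_eq_zero_iff] at h3
    have h4 := h3.resolve_right (by norm_num)
    rw [Complex.ext_iff] at h4
    simp [Complex.mul_re, Complex.mul_im] at h4
    exact ⟨h4.1, h4.2⟩
  obtain ⟨ha, hb⟩ := key1
  have inner_zero : ∀ u : EuclideanSpace ℂ (Fin (n+1)), fderiv ℝ ρ p u = 0 →
      (inner ℝ p u : ℝ) = 0 := by
    intro u hu
    have h5 : (inner ℝ p u : ℝ)/R^2 * cder = 0 := by rw [← hdecomp u, hu]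
    rcases mul_eq_zero.mp h5 with h | h
    · rcases div_eq_zero_iff.mp h with h' | h'
      · exact h'
      · exact absurd h' (by positivity)
    · exact absurd h (ne_of_gt hcpos)
  have hrw : (inner ℝ p w : ℝ) = 0 := inner_zero w ha
  have hriw : (inner ℝ p (Complex.I • w) : ℝ) = 0 := inner_zero _ hb
  set ε := ‖w‖^2/(4*R^2) with hεdef
  have hwn : 0 < ‖w‖ := norm_pos_iff.mpr hw
  have hε : 0 < ε := by positivity
  -- Step D: key second order estimate
  have key2 : ∀ u : EuclideanSpace ℂ (Fin (n+1)), ‖u‖ = ‖w‖ → (inner ℝ p u : ℝ) = 0 →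
      2*ε*cder ≤ T u u := by
    intro u hun hpu
    set γ : ℝ → EuclideanSpace ℂ (Fin (n+1)) := fun s => (1 - ε*s^2) • p + s • u with hγdef
    have hγ0 : γ 0 = p := by simp [hγdef]
    have hφpos : ∀ s : ℝ, 0 ≤ ρ (γ s) := by
      intro s
      rcases eq_or_ne s 0 with h | h
      · rw [h, hγ0, hρp]
      · apply key0
        apply sq_lift
        rw [hγdef]
        rw [normsq_aux p u (1 - ε*s^2) s, hpu, ← hRdef, hun]
        have hs2 : 0 < s^2 := by positivity
        have hεR : ε*R^2 = ‖w‖^2/4 := by rw [hεdef]; field_simp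
        have h1 : (1-ε*s^2)^2*R^2 + 2*((1-ε*s^2)*s)*0 + s^2*‖w‖^2
            = R^2 + s^2*(‖w‖^2/2) + ε^2*s^4*R^2 := by
          linear_combination (-2*s^2) * hεR
        rw [h1]
        have h2 : 0 < s^2*(‖w‖^2/2) := by positivity
        have h3 : 0 ≤ ε^2*s^4*R^2 := by positivity
        linarith
    have hγd : ∀ s : ℝ, HasDerivAt γ ((-(ε*(2*s))) • p + u) s := by
      intro s
      have h1 : HasDerivAt (fun s : ℝ => 1 - ε*s^2) (0 - ε*(2*s^1)) s :=
        (hasDerivAt_const s (1:ℝ)).sub ((hasDerivAt_pow 2 s).const_mul ε)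
      have h2 := (h1.smul_const p).add ((hasDerivAt_id s).smul_const u)
      refine h2.congr_deriv ?_
      module
    set d : ℝ → ℝ := fun s => fderiv ℝ ρ (γ s) ((-(ε*(2*s))) • p + u) with hddef
    have hφd : ∀ s : ℝ, HasDerivAt (fun t => ρ (γ t)) (d s) s := by
      intro s
      exact ((hdρ (γ s)).hasFDerivAt).comp_hasDerivAt s (hγd s)
    have hAu : HasDerivAt (fun s => fderiv ℝ ρ (γ s) u) (T u u) 0 := by
      have h' : HasFDerivAt (fun q => fderiv ℝ ρ q u) (T.flip u) (γ 0) := by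
        rw [hγ0]; exact hclm u
      have h2 := h'.comp_hasDerivAt 0 (hγd 0)
      refine h2.congr_deriv ?_
      simp
    have hBu : HasDerivAt (fun s => fderiv ℝ ρ (γ s) p) (T u p) 0 := by
      have h' : HasFDerivAt (fun q => fderiv ℝ ρ q p) (T.flip p) (γ 0) := by
        rw [hγ0]; exact hclm p
      have h2 := h'.comp_hasDerivAt 0 (hγd 0)
      refine h2.congr_deriv ?_
      simp
    have hlin : HasDerivAt (fun s : ℝ => -(ε*(2*s))) (-(ε*2)) 0 := by
      have heq : (fun s : ℝ => -(ε*(2*s))) = fun s : ℝ => -((ε*2)*s) := by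
        funext s; ring
      rw [heq]
      exact (((hasDerivAt_id (0:ℝ)).const_mul (ε*2)).neg).congr_deriv (by simp)
    have hd : HasDerivAt d (T u u - 2*ε*cder) 0 := by
      have hdd : d = fun s => (-(ε*(2*s))) * fderiv ℝ ρ (γ s) p + fderiv ℝ ρ (γ s) u := by
        funext s
        rw [hddef]
        simp [map_add, map_smul, smul_eq_mul]
      rw [hdd]
      have h2 := (hlin.mul hBu).add hAu
      refine h2.congr_deriv ?_
      rw [hγ0, ← hcdef]
      ring
    have hkey := second_deriv_nonneg (fun t => ρ (γ t)) d (T u u - 2*ε*cder) hφd hd hφpos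
      (by simp [hγ0, hρp])
    linarith
  -- the Levi form at p
  have hcoer : ∀ u : EuclideanSpace ℂ (Fin (n+1)),
      HasFDerivAt (fun q => ((fderiv ℝ ρ q u : ℝ) : ℂ)) (Complex.ofRealCLM.comp (T.flip u)) p :=
    fun u => (Complex.ofRealCLM.hasFDerivAt).comp p (hclm u)
  set Dfin : EuclideanSpace ℂ (Fin (n+1)) →L[ℝ] ℂ :=
    (2:ℂ)⁻¹ • (Complex.ofRealCLM.comp (T.flip w)
      - Complex.I • Complex.ofRealCLM.comp (T.flip (Complex.I • w))) with hDdef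
  have hwirtfd : HasFDerivAt (wirt ρ w) Dfin p := by
    have heq : wirt ρ w = fun q => (2:ℂ)⁻¹ • ( ((fderiv ℝ ρ q w : ℝ):ℂ)
        - Complex.I • ((fderiv ℝ ρ q (Complex.I • w) : ℝ):ℂ) ) := by
      funext q
      rw [wirt]
      rw [smul_eq_mul, smul_eq_mul]
      ring
    rw [heq, hDdef]
    exact ((hcoer w).sub ((hcoer (Complex.I • w)).const_smul Complex.I)).const_smul ((2:ℂ)⁻¹)
  have hfd_eq : fderiv ℝ (wirt ρ w) p = Dfin := hwirtfd.fderiv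
  have hlevi : (levi ρ p w).re = (T w w + T (Complex.I • w) (Complex.I • w))/4 := by
    rw [levi, hfd_eq, hDdef]
    simp only [ContinuousLinearMap.smul_apply, ContinuousLinearMap.sub_apply,
      ContinuousLinearMap.coe_comp', Function.comp_apply, ContinuousLinearMap.flip_apply,
      Complex.ofRealCLM_apply, smul_eq_mul]
    simp [Complex.div_re, Complex.mul_re, Complex.mul_im, Complex.normSq]
    ring
  rw [hlevi]
  have k1 := key2 w rfl hrw
  have k2 := key2 (Complex.I • w) (by rw [norm_smul]; simp) hriw
  have hfin : 0 < ε*cder := mul_pos hε hcpos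
  linarith
end

section
/- Let Ω ⊆ ℂ^{n+1} be a bounded domain and p ∈ ∂Ω. Assume there exist r > 0 and a holomorphic function h : B(p, r) → ℂ (B(p,r) the open Euclidean ball) with h(p) = 1 and |h(ζ)| < 1 for all ζ ∈ (closure(Ω) ∩ B(p,r)) ∖ {p}. If q ∈ Ω and φ_ν ∈ Aut(Ω) satisfy φ_ν(q) → p, then the sequence φ_ν converges to the constant map z ↦ p uniformly on compact subsets of Ω. -/
open Set Filter Topology Metric

variable {E : Type*} [NormedAddCommGroup E] [NormedSpace ℂ E]

/-- A baby Montel theorem: a sequence of holomorphic functions on the disc of radius 4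
with values in a fixed compact set has a subsequence converging uniformly on the
closed disc of radius 2. -/
lemma montel_lite {G : Type*} [NormedAddCommGroup G] [NormedSpace ℂ G]
    [FiniteDimensional ℂ G] {C : Set G} (hC : IsCompact C)
    (f : ℕ → ℂ → G) (hf : ∀ k, DifferentiableOn ℂ (f k) (ball 0 4))
    (hmem : ∀ k, ∀ t ∈ ball (0:ℂ) 4, f k t ∈ C) :
    ∃ (σ : ℕ → ℕ) (g : ℂ → G), StrictMono σ ∧
      TendstoUniformlyOn (fun k => f (σ k)) g atTop (closedBall 0 2) := by
  -- a diameter bound for C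
  obtain ⟨M, hM⟩ := hC.isBounded.subset_closedBall 0
  set D : ℝ := 2 * max M 0 + 1 with hD
  have hDpos : 0 < D := by positivity
  have hdistC : ∀ w ∈ C, ∀ w' ∈ C, dist w w' < D := by
    intro w hw w' hw'
    have h1 : dist w (0:G) ≤ max M 0 := le_trans (hM hw) (le_max_left _ _)
    have h2 : dist w' (0:G) ≤ max M 0 := le_trans (hM hw') (le_max_left _ _)
    calc dist w w' ≤ dist w 0 + dist (0:G) w' := dist_triangle _ _ _
      _ ≤ max M 0 + max M 0 := by rw [dist_comm (0:G) w']; exact add_le_add h1 h2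
      _ < D := by rw [hD]; linarith
  -- uniform Lipschitz bound on closedBall 0 2
  have hsub : closedBall (0:ℂ) 2 ⊆ ball (0:ℂ) 4 :=
    closedBall_subset_ball (by norm_num)
  have hlip : ∀ k, ∀ t ∈ closedBall (0:ℂ) 2, ∀ t' ∈ closedBall (0:ℂ) 2,
      dist (f k t) (f k t') ≤ (D / 2) * dist t t' := by
    intro k t ht t' ht'
    have hball : ball t' 2 ⊆ ball (0:ℂ) 4 := by
      apply ball_subset_ball'
      rw [mem_closedBall] at ht'
      linarith
    rcases lt_or_ge (dist t t') 2 with hd | hd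
    · have hmaps : MapsTo (f k) (ball t' 2) (ball (f k t') D) := by
        intro z hz
        exact mem_ball.2
          (hdistC _ (hmem k z (hball hz)) _ (hmem k t' (hball (mem_ball_self two_pos))))
      have := Complex.dist_le_div_mul_dist_of_mapsTo_ball ((hf k).mono hball) (hmaps.mono_right ball_subset_closedBall)
        (mem_ball.2 hd)
      linarith
    · have h1 : f k t ∈ C := hmem k t (hsub ht)
      have h2 : f k t' ∈ C := hmem k t' (hsub ht')
      have := (hdistC _ h1 _ h2).le
      nlinarith [dist_nonneg (x := t) (y := t')]
  set K : Set ℂ := closedBall 0 2 with hK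
  haveI : CompactSpace K := isCompact_iff_compactSpace.mp (isCompact_closedBall 0 2)
  set L : NNReal := Real.toNNReal (D / 2) with hL
  have hLcoe : (L : ℝ) = D / 2 := Real.coe_toNNReal _ (by positivity)
  -- the compact set in C(K, G)
  set S : Set C(K, G) := {F | LipschitzWith L ⇑F ∧ ∀ x, F x ∈ C} with hS
  have hScomp : IsCompact S := by
    apply ArzelaAscoli.isCompact_of_equicontinuous
    · -- pointwise compactness
      have himage : ContinuousMap.toFun '' S = {u : K → G | LipschitzWith L u ∧ ∀ x, u x ∈ C} := by
        ext u
        constructor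
        · rintro ⟨F, hF, rfl⟩; exact hF
        · rintro ⟨h1, h2⟩; exact ⟨⟨u, h1.continuous⟩, ⟨h1, h2⟩, rfl⟩
      rw [himage]
      apply IsCompact.of_isClosed_subset (isCompact_univ_pi (fun _ : K => hC))
      · have : {u : K → G | LipschitzWith L u ∧ ∀ x, u x ∈ C} =
            (⋂ (x : K) (y : K), {u : K → G | dist (u x) (u y) ≤ L * dist x y}) ∩
            (⋂ (x : K), {u : K → G | u x ∈ C}) := by
          ext u
          simp only [mem_setOf_eq, mem_inter_iff, mem_iInter, lipschitzWith_iff_dist_le_mul]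
        rw [this]
        apply IsClosed.inter
        · exact isClosed_iInter fun x => isClosed_iInter fun y =>
            isClosed_le ((continuous_apply x).dist (continuous_apply y)) continuous_const
        · exact isClosed_iInter fun x => hC.isClosed.preimage (continuous_apply x)
      · intro u hu
        exact fun x _ => hu.2 x
    · -- equicontinuity
      apply Metric.equicontinuous_of_continuity_modulus (fun d => (D / 2) * d)
      · have : Tendsto (fun d : ℝ => (D / 2) * d) (𝓝 0) (𝓝 ((D / 2) * 0)) :=
          (continuous_const.mul continuous_id).tendsto 0
        simpa using this
      · rintro x y ⟨F, hF⟩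
        calc dist (F x) (F y) ≤ L * dist x y := hF.1.dist_le_mul x y
          _ = (D / 2) * dist x y := by rw [hLcoe]
  -- our sequence lives in S
  have hcont : ∀ k, ContinuousOn (f k) K := fun k => ((hf k).continuousOn).mono hsub
  set Fc : ℕ → C(K, G) := fun k => ⟨K.restrict (f k), (hcont k).restrict⟩ with hFc
  have hFcS : ∀ k, Fc k ∈ S := by
    intro k
    constructor
    · apply LipschitzWith.of_dist_le_mul
      intro x y
      calc dist (f k x) (f k y) ≤ (D / 2) * dist (x:ℂ) (y:ℂ) := hlip k x x.2 y y.2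
        _ = L * dist x y := by rw [hLcoe]; rfl
    · intro x; exact hmem k x (hsub x.2)
  obtain ⟨Glim, hGS, σ, hσ, hconv⟩ := hScomp.isSeqCompact hFcS
  -- extend Glim to a function on ℂ
  classical
  refine ⟨σ, fun t => if ht : t ∈ K then Glim ⟨t, ht⟩ else 0, hσ, ?_⟩
  rw [Metric.tendstoUniformlyOn_iff]
  intro ε hε
  have := (Metric.tendsto_nhds.mp hconv) ε hε
  filter_upwards [this] with k hk
  intro x hx
  rw [dif_pos hx, show f (σ k) x = Fc (σ k) ⟨x, hx⟩ from rfl]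
  calc dist (Glim ⟨x, hx⟩) (Fc (σ k) ⟨x, hx⟩)
      ≤ dist Glim (Fc (σ k)) := ContinuousMap.dist_apply_le_dist _
    _ = dist (Fc (σ k)) Glim := dist_comm _ _
    _ < ε := hk

/-- Localization: if `p ∈ ∂Ω` admits a local holomorphic peak function and an
automorphism orbit `φ_ν q → p`, then `φ_ν` converges to the constant map `p`
uniformly on compact subsets of `Ω`. -/
theorem localization_at_peak_point {n : ℕ}
    (Ω : Set (EuclideanSpace ℂ (Fin (n + 1))))
    (hopen : IsOpen Ω) (hconn : IsConnected Ω) (hbd : Bornology.IsBounded Ω)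
    (p : EuclideanSpace ℂ (Fin (n + 1))) (hp : p ∈ frontier Ω)
    (r : ℝ) (hr : 0 < r) (h : EuclideanSpace ℂ (Fin (n + 1)) → ℂ)
    (hhol : DifferentiableOn ℂ h (ball p r)) (hpeak : h p = 1)
    (hlt : ∀ ζ ∈ (closure Ω ∩ ball p r) \ {p}, ‖h ζ‖ < 1)
    (q : EuclideanSpace ℂ (Fin (n + 1))) (hq : q ∈ Ω)
    (φ : ℕ → EuclideanSpace ℂ (Fin (n + 1)) → EuclideanSpace ℂ (Fin (n + 1)))
    (hφ : ∀ ν, IsAut Ω (φ ν))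
    (hlim : Tendsto (fun ν => φ ν q) atTop (𝓝 p)) :
    TendstoLocallyUniformlyOn (fun ν => φ ν) (fun _ => p) atTop Ω := by
  have hpnot : p ∉ Ω := by
    rw [hopen.frontier_eq] at hp
    exact hp.2
  have hCcomp : IsCompact (closure Ω) :=
    Metric.isCompact_of_isClosed_isBounded isClosed_closure hbd.closure
  -- The key propagation lemma.
  have prop : ∀ a ∈ Ω, ∀ ρ : ℝ, 0 < ρ → closedBall a (2 * ρ) ⊆ Ω →
      Tendsto (fun ν => φ ν a) atTop (𝓝 p) →
      TendstoUniformlyOn φ (fun _ => p) atTop (closedBall a (ρ / 2)) := by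
    intro a ha ρ hρ hball hconv
    by_contra hcon
    rw [Metric.tendstoUniformlyOn_iff] at hcon
    push_neg at hcon
    obtain ⟨ε₀, hε₀, hfreq⟩ := hcon
    have hfreq' : ∃ᶠ ν in atTop, ∃ x ∈ closedBall a (ρ / 2), ε₀ ≤ dist p (φ ν x) := by
      apply hfreq.mono
      intro ν hν
      obtain ⟨x, hx1, hx2⟩ := hν
      exact ⟨x, hx1, hx2⟩
    obtain ⟨ν, hνmono, hνP⟩ := Filter.extraction_of_frequently_atTop hfreq'
    choose x hxmem hxdist using hνP
    -- the analytic discs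
    set y : ℕ → EuclideanSpace ℂ (Fin (n + 1)) := fun k => x k - a with hy
    have hynorm : ∀ k, ‖y k‖ ≤ ρ / 2 := by
      intro k
      have := hxmem k
      rw [mem_closedBall, dist_eq_norm] at this
      exact this
    set f : ℕ → ℂ → EuclideanSpace ℂ (Fin (n + 1)) :=
      fun k t => φ (ν k) (a + t • y k) with hf
    have hmapsΩ : ∀ k, ∀ t ∈ ball (0:ℂ) 4, a + t • y k ∈ Ω := by
      intro k t ht
      apply hball
      rw [mem_closedBall, dist_eq_norm, add_sub_cancel_left, norm_smul]
      rw [mem_ball, dist_zero_right] at ht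
      calc ‖t‖ * ‖y k‖ ≤ 4 * (ρ / 2) :=
        mul_le_mul ht.le (hynorm k) (norm_nonneg _) (by norm_num)
        _ = 2 * ρ := by ring
    have hfdiff : ∀ k, DifferentiableOn ℂ (f k) (ball 0 4) := by
      intro k
      apply ((hφ (ν k)).1.comp)
      · exact ((differentiable_id.smul_const (y k)).const_add a).differentiableOn
      · intro t ht
        exact hmapsΩ k t ht
    have hfmem : ∀ k, ∀ t ∈ ball (0:ℂ) 4, f k t ∈ closure Ω := by
      intro k t ht
      exact subset_closure ((hφ (ν k)).2.1.mapsTo (hmapsΩ k t ht))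
    obtain ⟨σ, g, hσ, hunif⟩ := montel_lite hCcomp f hfdiff hfmem
    have hνσ : StrictMono (ν ∘ σ) := hνmono.comp hσ
    -- identify g 0 = p
    have h0mem : (0:ℂ) ∈ closedBall (0:ℂ) 2 := mem_closedBall_self (by norm_num)
    have h1mem : (1:ℂ) ∈ closedBall (0:ℂ) 2 := by
      rw [mem_closedBall, dist_zero_right]
      norm_num
    have hg0 : g 0 = p := by
      have h1 : Tendsto (fun k => f (σ k) 0) atTop (𝓝 (g 0)) := hunif.tendsto_at h0mem
      have heqf : ∀ k, f (σ k) 0 = φ (ν (σ k)) a := by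
        intro k
        simp [hf]
      rw [show (fun k => f (σ k) 0) = fun k => φ (ν (σ k)) a from funext heqf] at h1
      exact tendsto_nhds_unique h1 (hconv.comp hνσ.tendsto_atTop)
    have hg1 : ε₀ ≤ dist p (g 1) := by
      have h1 : Tendsto (fun k => f (σ k) 1) atTop (𝓝 (g 1)) := hunif.tendsto_at h1mem
      have h2 : Tendsto (fun k => dist p (f (σ k) 1)) atTop (𝓝 (dist p (g 1))) :=
        tendsto_const_nhds.dist h1
      apply ge_of_tendsto h2
      filter_upwards with k
      have heqf : f (σ k) 1 = φ (ν (σ k)) (x (σ k)) := by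
        simp [hf, hy]
      rw [heqf]
      exact hxdist (σ k)
    -- g is holomorphic on ball 0 2
    have hTLU : TendstoLocallyUniformlyOn (fun k => f (σ k)) g atTop (ball 0 2) :=
      (hunif.tendstoLocallyUniformlyOn).mono ball_subset_closedBall
    have hb24 : ball (0:ℂ) 2 ⊆ ball (0:ℂ) 4 := ball_subset_ball (by norm_num)
    have hgdiff : DifferentiableOn ℂ g (ball 0 2) :=
      hTLU.differentiableOn
        (Eventually.of_forall fun k => (hfdiff (σ k)).mono hb24) isOpen_ball
    have hgmem : ∀ t ∈ closedBall (0:ℂ) 2, g t ∈ closure Ω := by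
      intro t ht
      apply isClosed_closure.mem_of_tendsto (hunif.tendsto_at ht)
      filter_upwards with k
      exact hfmem (σ k) t (closedBall_subset_ball (by norm_num) ht)
    -- the peak function argument
    set W : Set ℂ := ball 0 2 ∩ g ⁻¹' (ball p r) with hW
    have hWopen : IsOpen W :=
      hgdiff.continuousOn.isOpen_inter_preimage isOpen_ball isOpen_ball
    have h0W : (0:ℂ) ∈ W := by
      constructor
      · exact mem_ball_self (by norm_num)
      · rw [mem_preimage, hg0]
        exact mem_ball_self hr
    obtain ⟨ρ₀, hρ₀, hball0⟩ := Metric.isOpen_iff.mp hWopen 0 h0W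
    have hFdiff : DifferentiableOn ℂ (h ∘ g) W :=
      hhol.comp (hgdiff.mono inter_subset_left) (fun t ht => ht.2)
    have hFle : ∀ t ∈ W, ‖(h ∘ g) t‖ ≤ 1 := by
      intro t ht
      rcases eq_or_ne (g t) p with hgt | hgt
      · simp [Function.comp, hgt, hpeak]
      · apply le_of_lt
        apply hlt
        exact ⟨⟨hgmem t (ball_subset_closedBall ht.1), ht.2⟩, hgt⟩
    have hnorm0 : ‖(h ∘ g) 0‖ = 1 := by
      simp [Function.comp, hg0, hpeak]
    have hmax : IsMaxOn (norm ∘ (h ∘ g)) (ball (0:ℂ) ρ₀) 0 := by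
      intro t ht
      simp only [Function.comp_apply, mem_setOf_eq]
      calc ‖h (g t)‖ ≤ 1 := hFle t (hball0 ht)
        _ = ‖h (g 0)‖ := by rw [hg0, hpeak]; simp
    have hcl : closedBall (0:ℂ) (ρ₀ / 2) ⊆ ball (0:ℂ) ρ₀ :=
      closedBall_subset_ball (by linarith)
    have hdcc : DiffContOnCl ℂ (h ∘ g) (ball (0:ℂ) (ρ₀ / 2)) := by
      constructor
      · exact hFdiff.mono ((ball_subset_closedBall.trans hcl).trans hball0)
      · apply (hFdiff.continuousOn).mono
        refine subset_trans ?_ (subset_trans hcl hball0)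
        rw [closure_ball (0:ℂ) (by positivity : (ρ₀ / 2) ≠ 0)]
    have heqon := Complex.norm_eqOn_closedBall_of_isMaxOn hdcc
      (hmax.on_subset (ball_subset_ball (by linarith)))
    have hgp : ∀ t ∈ closedBall (0:ℂ) (ρ₀ / 2), g t = p := by
      intro t ht
      by_contra hne
      have h1 : ‖h (g t)‖ < 1 := by
        apply hlt
        exact ⟨⟨hgmem t ((hcl.trans hball0) ht |>.1 |> ball_subset_closedBall),
          ((hcl.trans hball0) ht).2⟩, hne⟩
      have h2 : ‖h (g t)‖ = ‖h (g 0)‖ := heqon ht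
      rw [hg0, hpeak] at h2
      simp only [norm_one] at h2
      linarith
    have hEvEq : g =ᶠ[𝓝 (0:ℂ)] fun _ => p :=
      eventually_of_mem (closedBall_mem_nhds 0 (by positivity)) hgp
    have hgan : AnalyticOnNhd ℂ g (ball 0 2) := hgdiff.analyticOnNhd isOpen_ball
    have hconst : AnalyticOnNhd ℂ (fun _ : ℂ => p) (ball 0 2) := analyticOnNhd_const
    have hEq := hgan.eqOn_of_preconnected_of_eventuallyEq hconst
      (convex_ball (0:ℂ) 2).isPreconnected (mem_ball_self (by norm_num)) hEvEq
    have : g 1 = p := hEq (by rw [mem_ball, dist_zero_right]; norm_num)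
    rw [this, dist_self] at hg1
    linarith
  -- distance-to-boundary function
  set d : EuclideanSpace ℂ (Fin (n + 1)) → ℝ := fun z => infDist z Ωᶜ with hd
  have hdpos : ∀ z ∈ Ω, 0 < d z := by
    intro z hz
    have hne : (Ωᶜ : Set (EuclideanSpace ℂ (Fin (n + 1)))).Nonempty := ⟨p, hpnot⟩
    exact (hopen.isClosed_compl.notMem_iff_infDist_pos hne).mp (not_not_intro hz)
  have hdball : ∀ z ∈ Ω, closedBall z (d z / 2) ⊆ Ω := by
    intro z hz w hw
    by_contra hwn
    have h1 : d z ≤ dist z w := Metric.infDist_le_dist_of_mem hwn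
    rw [mem_closedBall, dist_comm] at hw
    have := hdpos z hz
    linarith
  -- uniform convergence near points with convergent orbit
  have prop2 : ∀ a ∈ Ω, Tendsto (fun ν => φ ν a) atTop (𝓝 p) →
      TendstoUniformlyOn φ (fun _ => p) atTop (closedBall a (d a / 8)) := by
    intro a ha hconv
    have := prop a ha (d a / 4) (by linarith [hdpos a ha]) (by
      rw [show 2 * (d a / 4) = d a / 2 by ring]
      exact hdball a ha) hconv
    rw [show d a / 4 / 2 = d a / 8 by ring] at this
    exact this
  -- the set of points with convergent orbit
  set S : Set (EuclideanSpace ℂ (Fin (n + 1))) :=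
    {z | z ∈ Ω ∧ Tendsto (fun ν => φ ν z) atTop (𝓝 p)} with hSdef
  have hqS : q ∈ S := ⟨hq, hlim⟩
  have hstep : ∀ a ∈ S, ∀ z ∈ ball a (d a / 8), z ∈ S := by
    rintro a ⟨haΩ, haconv⟩ z hz
    have hzΩ : z ∈ Ω := by
      apply hdball a haΩ
      apply closedBall_subset_closedBall (by linarith [hdpos a haΩ]) (ball_subset_closedBall hz)
    exact ⟨hzΩ, (prop2 a haΩ haconv).tendsto_at (ball_subset_closedBall hz)⟩
  -- connectedness: S = Ω
  have hSΩ : ∀ z ∈ Ω, z ∈ S := by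
    by_contra hcon
    push_neg at hcon
    obtain ⟨b₀, hb₀Ω, hb₀S⟩ := hcon
    set U : Set (EuclideanSpace ℂ (Fin (n + 1))) := ⋃ (a ∈ S), ball a (d a / 8) with hU
    set V : Set (EuclideanSpace ℂ (Fin (n + 1))) :=
      ⋃ (b ∈ Ω \ S), ball b (d b / 16) with hV
    have hUopen : IsOpen U := isOpen_biUnion fun _ _ => isOpen_ball
    have hVopen : IsOpen V := isOpen_biUnion fun _ _ => isOpen_ball
    have hcover : Ω ⊆ U ∪ V := by
      intro z hz
      by_cases hzS : z ∈ S
      · left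
        exact mem_biUnion hzS (mem_ball_self (by linarith [hdpos z hz]))
      · right
        exact mem_biUnion ⟨hz, hzS⟩ (mem_ball_self (by linarith [hdpos z hz]))
    have hUS : ∀ z ∈ U, z ∈ S := by
      intro z hz
      obtain ⟨a, haS, hza⟩ := mem_iUnion₂.mp hz
      exact hstep a haS z hza
    have hkey : (Ω ∩ (U ∩ V)) = ∅ := by
      rw [eq_empty_iff_forall_notMem]
      rintro z ⟨hzΩ, hzU, hzV⟩
      obtain ⟨b, hbΩS, hzb⟩ := mem_iUnion₂.mp hzV
      have hzS : z ∈ S := hUS z hzU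
      -- show b ∈ S, contradiction
      have hdzb : dist z b < d b / 16 := by rwa [mem_ball] at hzb
      have hlipd : d b ≤ d z + dist z b := by
        rw [hd]
        calc infDist b Ωᶜ ≤ infDist z Ωᶜ + dist b z := infDist_le_infDist_add_dist
          _ = infDist z Ωᶜ + dist z b := by rw [dist_comm]
      have hbz : b ∈ ball z (d z / 8) := by
        rw [mem_ball, dist_comm]
        have hb : 0 < d b := hdpos b hbΩS.1
        linarith
      exact hbΩS.2 (hstep z hzS b hbz)
    have hpre := hconn.isPreconnected U V hUopen hVopen hcover
      ⟨q, hq, mem_biUnion hqS (mem_ball_self (by linarith [hdpos q hq]))⟩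
      ⟨b₀, hb₀Ω, mem_biUnion ⟨hb₀Ω, hb₀S⟩ (mem_ball_self (by linarith [hdpos b₀ hb₀Ω]))⟩
    rw [hkey] at hpre
    exact hpre.ne_empty rfl
  -- conclude local uniform convergence
  intro u hu z hz
  obtain ⟨hzΩ, hzconv⟩ := hSΩ z hz
  refine ⟨closedBall z (d z / 8), mem_nhdsWithin_of_mem_nhds
    (closedBall_mem_nhds z (by linarith [hdpos z hz])), ?_⟩
  exact (prop2 z hzΩ hzconv) u hu
end
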